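/- arXiv:1101.2418 — 2 statements merged into one kernel-verified Lean document; each statement's English description precedes it below -/
import Mathlib

section
/- Let g ≥ 1 be a natural number and let Γ_g be the genus-g surface group, i.e. the presented group on 2g generators a₁, b₁, …, a_g, b_g subject to the single relation ∏_{k=1}^{g} a_k b_k a_k⁻¹ b_k⁻¹ = 1. Then the abelianization of Γ_g is torsion-free: its only element of finite order is the identity. (Equivalently, the torsion subgroup of the first simplicial homology group H₁(Σ_g, ℤ) of the genus-g surface is trivial.) -/
open scoped commutatorElement

/-- The single defining relation of the genus-`g` surface group:
`(a₁ b₁ a₁⁻¹ b₁⁻¹) ⋯ (a_g b_g a_g⁻¹ b_g⁻¹)`, where the generator `aₖ` is indexed by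
`Sum.inl k` and `bₖ` by `Sum.inr k`. -/
def surfaceRelator (g : ℕ) : FreeGroup (Fin g ⊕ Fin g) :=
  (List.ofFn fun k : Fin g =>
    ⁅(FreeGroup.of (Sum.inl k) : FreeGroup (Fin g ⊕ Fin g)), FreeGroup.of (Sum.inr k)⁆).prod

/-- The genus-`g` surface group `Γ_g`, presented on the `2g` generators
`a₁, b₁, …, a_g, b_g` subject to the single relation `∏ₖ aₖ bₖ aₖ⁻¹ bₖ⁻¹ = 1`. -/
abbrev SurfaceGroup (g : ℕ) : Type :=
  PresentedGroup ({surfaceRelator g} : Set (FreeGroup (Fin g ⊕ Fin g)))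

section Aux

variable (g : ℕ)

abbrev SAb := Multiplicative ((Fin g ⊕ Fin g) →₀ ℤ)

lemma relator_maps_to_one :
    ∀ r ∈ ({surfaceRelator g} : Set (FreeGroup (Fin g ⊕ Fin g))),
      FreeGroup.lift (fun i => (Multiplicative.ofAdd (Finsupp.single i 1) : SAb g)) r = 1 := by
  rintro r rfl
  rw [surfaceRelator, map_list_prod]
  apply List.prod_eq_one
  intro x hx
  simp only [List.map_ofFn, List.mem_ofFn] at hx
  obtain ⟨k, rfl⟩ := hx
  simp [commutatorElement_def, mul_comm]

noncomputable def phi : Abelianization (SurfaceGroup g) →* SAb g :=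
  Abelianization.lift (PresentedGroup.toGroup (relator_maps_to_one g))

noncomputable def psi : SAb g →* Abelianization (SurfaceGroup g) :=
  (MulEquiv.multiplicativeAdditive _).toMonoidHom.comp
    (AddMonoidHom.toMultiplicative
      (Finsupp.liftAddHom fun i => zmultiplesHom _
        (Additive.ofMul (Abelianization.of (PresentedGroup.of i : SurfaceGroup g)))))

lemma psi_phi (x : Abelianization (SurfaceGroup g)) : psi g (phi g x) = x := by
  have : (psi g).comp (phi g) = MonoidHom.id _ := by
    apply Abelianization.hom_ext
    apply PresentedGroup.ext
    intro i
    simp [phi, psi, PresentedGroup.toGroup.of, Finsupp.sum_single_index]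
    change Additive.toMul (Finsupp.liftAddHom (fun i => zmultiplesHom _
      (Additive.ofMul (Abelianization.of (PresentedGroup.of i : SurfaceGroup g)))) (Finsupp.single i 1)) = _
    simp
  exact DFunLike.congr_fun this x

end Aux

/-- The abelianization of the genus-`g` surface group (i.e. the first homology group
`H₁(Σ_g, ℤ)`) is torsion-free: its only element of finite order is the identity. -/
theorem abelianization_surfaceGroup_torsionFree (g : ℕ) (hg : 1 ≤ g) :
    ∀ x : Abelianization (SurfaceGroup g), IsOfFinOrder x → x = 1 := by
  intro x hx
  have h : IsOfFinOrder (phi g x) := MonoidHom.isOfFinOrder (phi g) hx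
  obtain ⟨n, hn, hpow⟩ := isOfFinOrder_iff_pow_eq_one.mp h
  have hz : (phi g x).toAdd = 0 := by
    have : n • (phi g x).toAdd = 0 := by
      have := congrArg Multiplicative.toAdd hpow
      simpa using this
    have h2 : (n : ℤ) • (phi g x).toAdd = 0 := by
      rwa [natCast_zsmul]
    exact (smul_eq_zero.mp h2).resolve_left (by exact_mod_cast hn.ne')
  have : phi g x = 1 := by
    have := congrArg Multiplicative.ofAdd hz
    simpa using this
  calc x = psi g (phi g x) := (psi_phi g x).symm
    _ = 1 := by rw [this, map_one]
end

section
/- Kato's representation theorem for closed symmetric forms: let H be a complex Hilbert space, let D ⊆ H be a dense linear subspace, and let E : D × D → ℂ be a sesquilinear form which is symmetric (E(f, g) = conjugate of E(g, f) for all f, g ∈ D) and nonnegative (E(f, f) is a nonnegative real for all f ∈ D), and which is closed in the sense that D is complete with respect to the norm ‖f‖₁ = √(E(f,f) + ‖f‖²). Then there exists a unique densely defined self-adjoint operator K on H, with domain D(K) ⊆ D, which is positive (⟨K f, f⟩ ≥ 0 for all f ∈ D(K)), represents the form in the sense that ⟨K f, g⟩ = E(f, g) for all f ∈ D(K) and all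 g ∈ D, and whose domain D(K) is dense in D with respect to the norm ‖·‖₁. -/
open scoped InnerProductSpace

/-- The form norm `‖f‖₁ = √(E(f,f) + ‖f‖²)` associated to a nonnegative symmetric
sesquilinear form `E` on a dense subspace `D` of a Hilbert space. -/
noncomputable def formNormOne {H : Type*} [NormedAddCommGroup H] [InnerProductSpace ℂ H]
    (D : Submodule ℂ H) (E : D →ₗ⋆[ℂ] D →ₗ[ℂ] ℂ) (f : D) : ℝ :=
  Real.sqrt ((E f f).re + ‖(f : H)‖ ^ 2)

namespace KatoAux

variable {H : Type*} [NormedAddCommGroup H] [InnerProductSpace ℂ H]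

structure Setup (H : Type*) [NormedAddCommGroup H] [InnerProductSpace ℂ H] : Type _ where
  D : Submodule ℂ H
  E : D →ₗ⋆[ℂ] D →ₗ[ℂ] ℂ
  hsymm : ∀ f g : D, E f g = starRingEnd ℂ (E g f)
  hpos : ∀ f : D, ∃ r : ℝ, 0 ≤ r ∧ E f f = (r : ℂ)
  hclosed : ∀ u : ℕ → D,
      (∀ ε > 0, ∃ N : ℕ, ∀ m ≥ N, ∀ n ≥ N, formNormOne D E (u m - u n) < ε) →
      ∃ v : D, Filter.Tendsto (fun n => formNormOne D E (u n - v)) Filter.atTop (nhds 0)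

def Space (S : Setup H) : Type _ := S.D

variable {S : Setup H}

instance : AddCommGroup (Space S) := inferInstanceAs (AddCommGroup S.D)
instance : Module ℂ (Space S) := inferInstanceAs (Module ℂ S.D)

def Space.toD (f : Space S) : S.D := f

def Space.ofD (f : S.D) : Space S := f

@[simp] lemma toD_ofD (f : S.D) : (Space.ofD f : Space S).toD = f := rfl

lemma Ereal (S : Setup H) (f : S.D) : S.E f f = ((S.E f f).re : ℂ) := by
  obtain ⟨r, _, hr⟩ := S.hpos f
  rw [hr]; simp

lemma Ere_nonneg (S : Setup H) (f : S.D) : 0 ≤ (S.E f f).re := by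
  obtain ⟨r, hr0, hr⟩ := S.hpos f
  rw [hr]; simpa using hr0

noncomputable def core (S : Setup H) : InnerProductSpace.Core ℂ (Space S) where
  inner f g := S.E f.toD g.toD + ⟪(f.toD : H), (g.toD : H)⟫_ℂ
  conj_inner_symm f g := by
    simp only [map_add]
    rw [← S.hsymm f.toD g.toD, inner_conj_symm]
  re_inner_nonneg f := by
    have h1 := Ere_nonneg S f.toD
    have h2 : (0 : ℝ) ≤ RCLike.re (⟪(f.toD : H), (f.toD : H)⟫_ℂ) := inner_self_nonneg
    simp only [RCLike.re_to_complex] at h2 ⊢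
    simpa [Complex.add_re] using add_nonneg h1 h2
  add_left x y z := by
    show S.E (x.toD + y.toD) z.toD + ⟪((x.toD + y.toD : S.D) : H), (z.toD : H)⟫_ℂ = _
    rw [map_add, LinearMap.add_apply, Submodule.coe_add, inner_add_left]
    ring
  smul_left x y r := by
    show S.E (r • x.toD) y.toD + ⟪((r • x.toD : S.D) : H), (y.toD : H)⟫_ℂ = _
    rw [LinearMap.map_smulₛₗ, LinearMap.smul_apply, Submodule.coe_smul, inner_smul_left]
    simp [smul_eq_mul]; ring
  definite f hf := by
    have h0 : S.E f.toD f.toD + ⟪(f.toD : H), (f.toD : H)⟫_ℂ = 0 := hf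
    have hre : ((S.E f.toD f.toD + ⟪(f.toD : H), (f.toD : H)⟫_ℂ : ℂ)).re = 0 := by
      rw [h0]; simp
    have h1 := Ere_nonneg S f.toD
    have h2 : (⟪(f.toD : H), (f.toD : H)⟫_ℂ).re = ‖(f.toD : H)‖ ^ 2 := by
      have := inner_self_eq_norm_sq (𝕜 := ℂ) (x := (f.toD : H))
      simpa [RCLike.re_to_complex] using this
    rw [Complex.add_re, h2] at hre
    have hnorm : ‖(f.toD : H)‖ = 0 := by nlinarith [norm_nonneg (f.toD : H)]
    have : (f.toD : H) = 0 := norm_eq_zero.mp hnorm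
    show f.toD = 0
    exact Subtype.ext this

noncomputable instance : NormedAddCommGroup (Space S) :=
  @InnerProductSpace.Core.toNormedAddCommGroup ℂ (Space S) _ _ _ (core S)

noncomputable instance : InnerProductSpace ℂ (Space S) := InnerProductSpace.ofCore (core S).toCore

lemma inner_def (f g : Space S) :
    (⟪f, g⟫_ℂ : ℂ) = S.E f.toD g.toD + ⟪(f.toD : H), (g.toD : H)⟫_ℂ := rfl

lemma norm_def (f : Space S) : ‖f‖ = formNormOne S.D S.E f.toD := by
  rw [@norm_eq_sqrt_re_inner ℂ, inner_def]
  unfold formNormOne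
  congr 1
  have h2 : (⟪(f.toD : H), (f.toD : H)⟫_ℂ).re = ‖(f.toD : H)‖ ^ 2 := by
    have := inner_self_eq_norm_sq (𝕜 := ℂ) (x := (f.toD : H))
    simpa [RCLike.re_to_complex] using this
  simp [RCLike.re_to_complex, Complex.add_re, h2, ← Complex.ofReal_pow]

lemma toD_sub (f g : Space S) : (f - g).toD = f.toD - g.toD := rfl

instance : CompleteSpace (Space S) := by
  apply Metric.complete_of_cauchySeq_tendsto
  intro u hu
  rw [Metric.cauchySeq_iff] at hu
  have hc : ∀ ε > 0, ∃ N : ℕ, ∀ m ≥ N, ∀ n ≥ N,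
      formNormOne S.D S.E ((u m).toD - (u n).toD) < ε := by
    intro ε hε
    obtain ⟨N, hN⟩ := hu ε hε
    exact ⟨N, fun m hm n hn => by
      have h := hN m hm n hn
      rwa [dist_eq_norm, norm_def] at h⟩
  obtain ⟨v, hv⟩ := S.hclosed (fun n => (u n).toD) hc
  refine ⟨Space.ofD v, ?_⟩
  rw [tendsto_iff_dist_tendsto_zero]
  have heq : (fun n => dist (u n) (Space.ofD v))
      = fun n => formNormOne S.D S.E ((u n).toD - v) := by
    funext n
    rw [dist_eq_norm, norm_def]
    rfl
  rw [heq]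
  exact hv

noncomputable def jCLM (S : Setup H) : Space S →L[ℂ] H :=
  LinearMap.mkContinuous
    { toFun := fun f => ((f.toD : H))
      map_add' := fun f g => rfl
      map_smul' := fun c f => rfl } 1
    (by
      intro f
      rw [one_mul, norm_def]
      unfold formNormOne
      have h1 := Ere_nonneg S f.toD
      have h3 : Real.sqrt (‖(f.toD : H)‖ ^ 2) ≤
          Real.sqrt (((S.E f.toD) f.toD).re + ‖(f.toD : H)‖ ^ 2) :=
        Real.sqrt_le_sqrt (by nlinarith)
      rw [Real.sqrt_sq (norm_nonneg _)] at h3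
      exact h3)

@[simp] lemma jCLM_apply (f : Space S) : jCLM S f = (f.toD : H) := rfl



namespace Main

variable [CompleteSpace H] (S : Setup H)

noncomputable def T (S : Setup H) : H →L[ℂ] Space S := ContinuousLinearMap.adjoint (jCLM S)

lemma T_inner (h : H) (g : Space S) : ⟪T S h, g⟫_ℂ = ⟪h, (g.toD : H)⟫_ℂ :=
  ContinuousLinearMap.adjoint_inner_left (jCLM S) g h

noncomputable def A (S : Setup H) : H →L[ℂ] H := (jCLM S).comp (T S)

lemma A_apply (h : H) : A S h = (((T S h).toD : S.D) : H) := rfl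

lemma A_mem (h : H) : A S h ∈ S.D := ((T S h).toD).2

lemma A_inj (hD : Dense (S.D : Set H)) : Function.Injective (A S) := by
  intro h k hhk
  have : A S (h - k) = 0 := by rw [map_sub, hhk, sub_self]
  have hT0 : T S (h - k) = 0 := by
    apply Subtype.ext (p := fun x => x ∈ S.D)
    exact this
  have hz : ∀ v : S.D, ⟪h - k, (v : H)⟫_ℂ = 0 := by
    intro v
    have := T_inner S (h - k) (Space.ofD v)
    rw [hT0] at this
    simpa using this.symm
  exact sub_eq_zero.mp (hD.eq_zero_of_inner_left ℂ (fun v hv => hz ⟨v, hv⟩))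

noncomputable def M (S : Setup H) : Submodule ℂ H := LinearMap.range ((A S) : H →ₗ[ℂ] H)

variable (hD : Dense (S.D : Set H))

lemma M_le_D : M S ≤ S.D := by
  rintro x ⟨h, rfl⟩
  exact A_mem S h

noncomputable def e (hD : Dense (S.D : Set H)) : H ≃ₗ[ℂ] M S :=
  LinearEquiv.ofInjective ((A S) : H →ₗ[ℂ] H) (by
    intro a b hab
    exact A_inj S hD hab)

lemma coe_e (h : H) : ((e S hD h : M S) : H) = A S h := rfl

lemma e_symm_apply (x : M S) : A S ((e S hD).symm x) = (x : H) := by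
  conv_rhs => rw [← (e S hD).apply_symm_apply x]
  exact (coe_e S hD _).symm

noncomputable def K (hD : Dense (S.D : Set H)) : H →ₗ.[ℂ] H :=
  ⟨M S, ((e S hD).symm : M S →ₗ[ℂ] H) - (M S).subtype⟩

lemma K_domain : (K S hD).domain = M S := rfl

lemma K_apply (x : M S) : (K S hD).toFun x = (e S hD).symm x - (x : H) := rfl

lemma K_apply_e (h : H) : (K S hD).toFun (e S hD h) = h - A S h := by
  rw [K_apply, (e S hD).symm_apply_apply, coe_e]

lemma central (h : H) (g : S.D) :
    ⟪(K S hD).toFun (e S hD h), (g : H)⟫_ℂ = S.E (T S h).toD g := by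
  rw [K_apply_e, inner_sub_left]
  have h1 : ⟪h, (g : H)⟫_ℂ = ⟪T S h, Space.ofD g⟫_ℂ := by
    rw [T_inner]; rfl
  rw [h1, inner_def]
  have h2 : (((T S h).toD : S.D) : H) = A S h := rfl
  simp only [toD_ofD, h2]
  ring

lemma coe_in_D (x : M S) : ((x : H)) ∈ S.D := M_le_D S x.2

lemma central' (x : M S) (g : S.D) :
    ⟪(K S hD).toFun x, (g : H)⟫_ℂ = S.E ⟨(x : H), coe_in_D S x⟩ g := by
  have hx : x = e S hD ((e S hD).symm x) := ((e S hD).apply_symm_apply x).symm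
  have hco : (⟨(x : H), coe_in_D S x⟩ : S.D) = (T S ((e S hD).symm x)).toD := by
    apply Subtype.ext
    show (x : H) = A S ((e S hD).symm x)
    rw [e_symm_apply]
  rw [hco]
  conv_lhs => rw [hx]
  exact central S hD ((e S hD).symm x) g

lemma T_denseRange : DenseRange (T S) := by
  have hset : Set.range (T S) = ((LinearMap.range ((T S) : H →ₗ[ℂ] Space S) : Submodule ℂ (Space S)) : Set (Space S)) := by
    rw [LinearMap.coe_range]; rfl
  rw [DenseRange, hset]
  rw [Submodule.dense_iff_topologicalClosure_eq_top, Submodule.topologicalClosure_eq_top_iff]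
  rw [Submodule.eq_bot_iff]
  intro g hg
  have h0 : ⟪T S (jCLM S g), g⟫_ℂ = 0 :=
    (Submodule.mem_orthogonal _ g).mp hg (T S (jCLM S g)) ⟨jCLM S g, rfl⟩
  rw [T_inner] at h0
  have h1 : ⟪((g.toD : S.D) : H), ((g.toD : S.D) : H)⟫_ℂ = 0 := h0
  have h2 : ((g.toD : S.D) : H) = 0 := inner_self_eq_zero.mp h1
  show g = 0
  exact Subtype.ext h2

include hD in
lemma j_denseRange : DenseRange (jCLM S) := by
  have hset : Set.range (jCLM S) = (S.D : Set H) := by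
    ext x
    constructor
    · rintro ⟨f, rfl⟩
      exact (f.toD).2
    · intro hx
      exact ⟨Space.ofD ⟨x, hx⟩, rfl⟩
  rw [DenseRange, hset]
  exact hD

include hD in
lemma A_denseRange : DenseRange (A S) := by
  have : DenseRange ((jCLM S) ∘ (T S)) :=
    (j_denseRange S hD).comp (T_denseRange S) (jCLM S).continuous
  exact this

include hD in
lemma M_dense : Dense ((M S : Set H)) := by
  have : (M S : Set H) = Set.range (A S) := by
    show ((LinearMap.range ((A S) : H →ₗ[ℂ] H) : Submodule ℂ H) : Set H) = _
    rw [LinearMap.coe_range]; rfl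
  rw [this]
  exact A_denseRange S hD


lemma K_dense : Dense (((K S hD).domain : Submodule ℂ H) : Set H) := M_dense S hD

lemma K_symm : (K S hD).IsFormalAdjoint (K S hD) := by
  intro x y
  show ⟪(K S hD).toFun x, (y : H)⟫_ℂ = ⟪(x : H), (K S hD).toFun y⟫_ℂ
  rw [central' S hD x ⟨(y : H), coe_in_D S y⟩]
  rw [S.hsymm]
  rw [← central' S hD y ⟨(x : H), coe_in_D S x⟩]
  rw [inner_conj_symm]

lemma K_le_adjoint : K S hD ≤ (K S hD).adjoint :=
  LinearPMap.IsFormalAdjoint.le_adjoint (K_dense S hD) (K_symm S hD)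

lemma adjoint_aux (x : ((K S hD).adjoint).domain) :
    (x : H) = ((e S hD (((K S hD).adjoint x) + x) : M S) : H) := by
  set g : H := (x : H) with hg
  set gs : H := (K S hD).adjoint x with hgs
  set u : M S := e S hD (gs + g) with hu
  have adj := LinearPMap.adjoint_isFormalAdjoint (T := K S hD) (K_dense S hD)
  have hKu : (K S hD).toFun u + (u : H) = gs + g := by
    rw [hu, K_apply_e, coe_e]
    abel
  apply ext_inner_left ℂ
  intro h
  have hsplit : h = (K S hD).toFun (e S hD h) + A S h := by
    rw [K_apply_e]; abel
  have e1 : ⟪(K S hD).toFun (e S hD h), g⟫_ℂ = ⟪A S h, gs⟫_ℂ := by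
    have h3 : ⟪gs, A S h⟫_ℂ = ⟪g, (K S hD).toFun (e S hD h)⟫_ℂ := adj x (e S hD h)
    rw [← inner_conj_symm, ← h3, inner_conj_symm]
  have e2 : ⟪(K S hD).toFun (e S hD h), (u : H)⟫_ℂ = ⟪A S h, (K S hD).toFun u⟫_ℂ := by
    have := K_symm S hD (e S hD h) u
    rw [← coe_e S hD h]
    exact this
  calc ⟪h, g⟫_ℂ = ⟪(K S hD).toFun (e S hD h) + A S h, g⟫_ℂ := by rw [← hsplit]
    _ = ⟪(K S hD).toFun (e S hD h), g⟫_ℂ + ⟪A S h, g⟫_ℂ := inner_add_left _ _ _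
    _ = ⟪A S h, gs⟫_ℂ + ⟪A S h, g⟫_ℂ := by rw [e1]
    _ = ⟪A S h, gs + g⟫_ℂ := by rw [inner_add_right]
    _ = ⟪A S h, (K S hD).toFun u + (u : H)⟫_ℂ := by rw [hKu]
    _ = ⟪A S h, (K S hD).toFun u⟫_ℂ + ⟪A S h, (u : H)⟫_ℂ := inner_add_right _ _ _
    _ = ⟪(K S hD).toFun (e S hD h), (u : H)⟫_ℂ + ⟪A S h, (u : H)⟫_ℂ := by rw [e2]
    _ = ⟪(K S hD).toFun (e S hD h) + A S h, (u : H)⟫_ℂ := (inner_add_left _ _ _).symm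
    _ = ⟪h, (u : H)⟫_ℂ := by rw [← hsplit]

lemma adjoint_le_K : (K S hD).adjoint ≤ K S hD := by
  constructor
  · intro y hy
    have h2 : y = ((e S hD (((K S hD).adjoint ⟨y, hy⟩) + y) : M S) : H) :=
      adjoint_aux S hD ⟨y, hy⟩
    rw [h2]
    exact (e S hD _).2
  · intro x y hxy
    have hx := adjoint_aux S hD x
    set gs : H := (K S hD).adjoint x with hgs
    set u : M S := e S hD (gs + (x : H)) with hu
    have hyu : y = u := Subtype.ext (by rw [← hxy]; exact hx)
    show (K S hD).adjoint x = (K S hD).toFun y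
    rw [hyu, hu, K_apply_e]
    have hAu : A S (gs + (x : H)) = (x : H) := hx.symm
    rw [hAu, ← hgs]
    abel

lemma K_selfAdjoint : IsSelfAdjoint (K S hD) :=
  LinearPMap.isSelfAdjoint_def.mpr (le_antisymm (adjoint_le_K S hD) (K_le_adjoint S hD))

lemma K_pos (x : M S) : ∃ r : ℝ, 0 ≤ r ∧ ⟪(K S hD).toFun x, (x : H)⟫_ℂ = (r : ℂ) := by
  obtain ⟨r, hr0, hr⟩ := S.hpos ⟨(x : H), coe_in_D S x⟩
  refine ⟨r, hr0, ?_⟩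
  rw [central' S hD x ⟨(x : H), coe_in_D S x⟩, hr]

include hD in
lemma K_formDense (g : S.D) (ε : ℝ) (hε : 0 < ε) :
    ∃ x : M S, formNormOne S.D S.E (⟨(x : H), coe_in_D S x⟩ - g) < ε := by
  obtain ⟨h, hh⟩ := (T_denseRange S).exists_dist_lt (Space.ofD g) hε
  refine ⟨e S hD h, ?_⟩
  have h1 : (⟨((e S hD h : M S) : H), coe_in_D S _⟩ : S.D) = (T S h).toD :=
    Subtype.ext (coe_e S hD h)
  rw [h1]
  have h2 : formNormOne S.D S.E ((T S h).toD - g) = dist (T S h) (Space.ofD g) := by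
    rw [dist_eq_norm, norm_def]
    rfl
  rw [h2, dist_comm]
  exact hh

lemma K_unique (K' : H →ₗ.[ℂ] H) (hd' : Dense ((K'.domain : Submodule ℂ H) : Set H))
    (hsub' : K'.domain ≤ S.D) (hsa' : IsSelfAdjoint K')
    (hrep' : ∀ f : K'.domain, ∀ g : S.D,
      ⟪K' f, (g : H)⟫_ℂ = S.E ⟨(f : H), hsub' f.2⟩ g) :
    K' = K S hD := by
  have haux : ∀ f : K'.domain, T S (K' f + (f : H)) = Space.ofD ⟨(f : H), hsub' f.2⟩ := by
    intro f
    apply ext_inner_right ℂ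
    intro g
    rw [T_inner, inner_add_left, hrep' f g.toD]
    rfl
  have hA : ∀ f : K'.domain, A S (K' f + (f : H)) = (f : H) := by
    intro f
    show (((T S (K' f + (f : H))).toD : S.D) : H) = (f : H)
    rw [haux f]
    rfl
  have hle : K' ≤ K S hD := by
    constructor
    · intro y hy
      exact ⟨K' ⟨y, hy⟩ + y, hA ⟨y, hy⟩⟩
    · intro x y hxy
      have hy : y = e S hD (K' x + (x : H)) := by
        apply Subtype.ext
        rw [coe_e, hA x, hxy]
      show K' x = (K S hD).toFun y
      rw [hy, K_apply_e, hA x]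
      abel
  have hformal : K'.IsFormalAdjoint (K S hD) := by
    intro x y
    show ⟪K' x, (y : H)⟫_ℂ = ⟪(x : H), (K S hD).toFun y⟫_ℂ
    rw [hrep' x ⟨(y : H), coe_in_D S y⟩, S.hsymm,
      ← central' S hD y ⟨(x : H), hsub' x.2⟩, inner_conj_symm]
  have hge : K S hD ≤ K' := by
    have h1 : K S hD ≤ K'.adjoint :=
      LinearPMap.IsFormalAdjoint.le_adjoint hd' hformal
    rwa [LinearPMap.isSelfAdjoint_def.mp hsa'] at h1
  exact le_antisymm hle hge

theorem main (S : Setup H) (hD : Dense ((S.D : Submodule ℂ H) : Set H)) :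
    ∃! K : H →ₗ.[ℂ] H,
      Dense ((K.domain : Submodule ℂ H) : Set H) ∧
      ∃ hsub : K.domain ≤ S.D,
        IsSelfAdjoint K ∧
        (∀ f : K.domain, ∃ r : ℝ, 0 ≤ r ∧ ⟪K f, (f : H)⟫_ℂ = (r : ℂ)) ∧
        (∀ f : K.domain, ∀ g : S.D,
          ⟪K f, (g : H)⟫_ℂ = S.E (⟨(f : H), hsub f.2⟩ : S.D) g) ∧
        (∀ g : S.D, ∀ ε > 0, ∃ f : K.domain,
          formNormOne S.D S.E ((⟨(f : H), hsub f.2⟩ : S.D) - g) < ε) := by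
  refine ⟨K S hD, ⟨K_dense S hD, M_le_D S, K_selfAdjoint S hD, ?_, ?_, ?_⟩, ?_⟩
  · intro f
    exact K_pos S hD f
  · intro f g
    exact central' S hD f g
  · intro g ε hε
    exact K_formDense S hD g ε hε
  · rintro K' ⟨hd', hsub', hsa', _, hrep', _⟩
    exact K_unique S hD K' hd' hsub' hsa' hrep'

end Main
end KatoAux

/-- **Kato's representation theorem for closed symmetric forms.**
Let `H` be a complex Hilbert space, `D ⊆ H` a dense linear subspace and `E` a sesquilinear
form on `D` which is symmetric, nonnegative and closed (i.e. `D` is complete in the norm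
`‖f‖₁ = √(E(f,f) + ‖f‖²)`).  Then there is a unique densely defined self-adjoint operator
`K` on `H`, with domain contained in `D`, which is positive, satisfies
`⟨K f, g⟩ = E(f, g)` for all `f ∈ D(K)` and `g ∈ D`, and whose domain is `‖·‖₁`-dense
in `D`. -/


theorem kato_representation_theorem
    {H : Type*} [NormedAddCommGroup H] [InnerProductSpace ℂ H] [CompleteSpace H]
    (D : Submodule ℂ H) (hD : Dense (D : Set H))
    (E : D →ₗ⋆[ℂ] D →ₗ[ℂ] ℂ)
    (hsymm : ∀ f g : D, E f g = starRingEnd ℂ (E g f))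
    (hpos : ∀ f : D, ∃ r : ℝ, 0 ≤ r ∧ E f f = (r : ℂ))
    (hclosed : ∀ u : ℕ → D,
      (∀ ε > 0, ∃ N : ℕ, ∀ m ≥ N, ∀ n ≥ N, formNormOne D E (u m - u n) < ε) →
      ∃ v : D, Filter.Tendsto (fun n => formNormOne D E (u n - v)) Filter.atTop (nhds 0)) :
    ∃! K : H →ₗ.[ℂ] H,
      Dense (K.domain : Set H) ∧
      ∃ hsub : K.domain ≤ D,
        IsSelfAdjoint K ∧
        (∀ f : K.domain, ∃ r : ℝ, 0 ≤ r ∧ ⟪K f, (f : H)⟫_ℂ = (r : ℂ)) ∧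
        (∀ f : K.domain, ∀ g : D,
          ⟪K f, (g : H)⟫_ℂ = E (⟨(f : H), hsub f.2⟩ : D) g) ∧
        (∀ g : D, ∀ ε > 0, ∃ f : K.domain,
          formNormOne D E ((⟨(f : H), hsub f.2⟩ : D) - g) < ε) := by
  exact KatoAux.Main.main ⟨D, E, hsymm, hpos, hclosed⟩ hD
end
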